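/- Let u be a vertex of an unweighted graph G with degree d, let H_u be the span of XZ even stars centered at u (Pauli strings X_u Π_i (Z_{v_i})^{x_i} with x of even Hamming weight), and let f(·) = (1/4)[H_p, [H_p, ·]] with H_p = Σ_{(a,b)∈E} Z_a Z_b. Then f restricted to H_u is diagonalizable with spectrum exactly {(d − 2k)^2 : 0 ≤ k ≤ d−1}. In particular, all eigenvalues of f|_{H_u} are squares of integers congruent to d mod 2, so if u has even degree all eigenvalues are even, and if u has odd degree all eigenvalues are odd. -/

import Mathlib

/-- The Pauli `X` operator acting on qubit `u` (tensored with identity elsewhere),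
as a matrix on the computational basis `V → Bool`. -/
noncomputable def PX {V : Type*} [Fintype V] [DecidableEq V] (u : V) :
    Matrix (V → Bool) (V → Bool) ℂ :=
  fun s t => if s = Function.update t u (!(t u)) then 1 else 0

/-- The Pauli `Z` operator acting on qubit `u`. -/
noncomputable def PZ {V : Type*} [Fintype V] [DecidableEq V] (u : V) :
    Matrix (V → Bool) (V → Bool) ℂ :=
  Matrix.diagonal fun s => if s u then -1 else 1

/-- The operator `Z_u Z_v` associated with an unordered pair `{u, v}`. -/
noncomputable def PZZ {V : Type*} [Fintype V] [DecidableEq V] (e : Sym2 V) :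
    Matrix (V → Bool) (V → Bool) ℂ :=
  Sym2.lift ⟨fun a b => PZ a * PZ b, fun a b => by
    show PZ a * PZ b = PZ b * PZ a
    unfold PZ
    rw [Matrix.diagonal_mul_diagonal, Matrix.diagonal_mul_diagonal,
      show (fun i : V → Bool => (if i a = true then (-1 : ℂ) else 1) *
          if i b = true then -1 else 1) =
        (fun i : V → Bool => (if i b = true then (-1 : ℂ) else 1) *
          if i a = true then -1 else 1) from funext fun i => mul_comm _ _]⟩ e

/-- The unweighted problem Hamiltonian `H_p = Σ_{(u,v)∈E} Z_u Z_v`. -/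
noncomputable def HpU {V : Type*} [Fintype V] [DecidableEq V] (G : SimpleGraph V)
    [DecidableRel G.Adj] : Matrix (V → Bool) (V → Bool) ℂ :=
  ∑ e ∈ G.edgeFinset, PZZ e

/-- The XZ star `S^u_x = X_u · Π_i (Z_{nbr i})^{x_i}`. -/
noncomputable def evenStar {V : Type*} [Fintype V] [DecidableEq V] (u : V) {d : ℕ}
    (nbr : Fin d → V) (x : Fin d → Bool) : Matrix (V → Bool) (V → Bool) ℂ :=
  PX u * Matrix.diagonal fun s =>
    ∏ i : Fin d, if x i then (if s (nbr i) then (-1 : ℂ) else 1) else 1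

/-- The span `H_u` of the XZ even stars centered at `u`. -/
noncomputable def starSpan {V : Type*} [Fintype V] [DecidableEq V] (u : V) {d : ℕ}
    (nbr : Fin d → V) : Submodule ℂ (Matrix (V → Bool) (V → Bool) ℂ) :=
  Submodule.span ℂ
    {M | ∃ x : Fin d → Bool,
      Even ((Finset.univ.filter fun i => x i = true).card) ∧ M = evenStar u nbr x}

namespace Stmt10Aux
open Matrix Finset
variable {V : Type*} [Fintype V] [DecidableEq V]

/-- flip coordinate `u` -/
def flip (u : V) (t : V → Bool) : V → Bool := Function.update t u (!(t u))

noncomputable def Phi (u : V) (g : (V → Bool) → ℂ) : Matrix (V → Bool) (V → Bool) ℂ :=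
  PX u * Matrix.diagonal g

lemma Phi_apply (u : V) (g : (V → Bool) → ℂ) (s t : V → Bool) :
    Phi u g s t = if s = flip u t then g t else 0 := by
  rw [Phi, Matrix.mul_diagonal]
  simp [PX, flip, ite_mul]
  split_ifs <;> simp_all

lemma evenStar_eq_Phi (u : V) {d : ℕ} (nbr : Fin d → V) (x : Fin d → Bool) :
    evenStar u nbr x = Phi u (fun s =>
      ∏ i : Fin d, if x i then (if s (nbr i) then (-1 : ℂ) else 1) else 1) := rfl

lemma Phi_smul (u : V) (c : ℂ) (g : (V → Bool) → ℂ) :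
    c • Phi u g = Phi u (fun t => c * g t) := by
  ext s t
  by_cases h : s = flip u t <;> simp [Phi_apply, h]

lemma Phi_sum {ι : Type*} (u : V) (s : Finset ι) (c : ι → ℂ) (g : ι → (V → Bool) → ℂ) :
    ∑ x ∈ s, c x • Phi u (g x) = Phi u (fun t => ∑ x ∈ s, c x * g x t) := by
  ext a b
  by_cases h : a = flip u b <;>
    simp [Phi_apply, Matrix.sum_apply, h]

lemma lie_diag_Phi (u : V) (h g : (V → Bool) → ℂ) :
    ⁅Matrix.diagonal h, Phi u g⁆ = Phi u (fun t => (h (flip u t) - h t) * g t) := by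
  ext s t
  rw [Ring.lie_def, Matrix.sub_apply]
  have h1 : (Matrix.diagonal h * Phi u g) s t = h s * Phi u g s t :=
    Matrix.diagonal_mul h (Phi u g) s t
  have h2 : (Phi u g * Matrix.diagonal h) s t = Phi u g s t * h t :=
    Matrix.mul_diagonal h (Phi u g) s t
  rw [h1, h2, Phi_apply, Phi_apply]
  by_cases hst : s = flip u t
  · rw [if_pos hst, if_pos hst, hst]; ring
  · rw [if_neg hst, if_neg hst]; ring

noncomputable def zf (e : Sym2 V) : (V → Bool) → ℂ :=
  Sym2.lift ⟨fun a b s => (if s a then (-1:ℂ) else 1) * (if s b then -1 else 1),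
    fun a b => funext fun s => mul_comm _ _⟩ e

lemma PZZ_eq (e : Sym2 V) : PZZ e = Matrix.diagonal (zf e) := by
  induction e using Sym2.ind with
  | _ a b => simp [PZZ, zf, PZ, Matrix.diagonal_mul_diagonal]

noncomputable def hfun (G : SimpleGraph V) [DecidableRel G.Adj] : (V → Bool) → ℂ :=
  fun s => ∑ e ∈ G.edgeFinset, zf e s

lemma HpU_diag (G : SimpleGraph V) [DecidableRel G.Adj] :
    HpU G = Matrix.diagonal (hfun G) := by
  rw [HpU]
  ext s t
  by_cases h : s = t <;>
    simp [PZZ_eq, Matrix.diagonal_apply, hfun, Matrix.sum_apply, h]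

lemma hfun_flip (G : SimpleGraph V) [DecidableRel G.Adj] (u : V) {d : ℕ}
    (nbr : Fin d → V) (hinj : Function.Injective nbr)
    (hnbr : ∀ w : V, G.Adj u w ↔ ∃ i, nbr i = w) (t : V → Bool) :
    hfun G (flip u t) - hfun G t =
      (-2) * (if t u then (-1:ℂ) else 1) * ∑ i, (if t (nbr i) then (-1:ℂ) else 1) := by
  have hadj : ∀ i, G.Adj u (nbr i) := fun i => (hnbr (nbr i)).2 ⟨i, rfl⟩
  rw [hfun, hfun, ← Finset.sum_sub_distrib,
    ← Finset.sum_filter_add_sum_filter_not G.edgeFinset (fun e => u ∈ e)]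
  have h2 : ∑ e ∈ G.edgeFinset.filter (fun e => ¬ u ∈ e), (zf e (flip u t) - zf e t) = 0 := by
    apply Finset.sum_eq_zero
    intro e he
    simp only [Finset.mem_filter] at he
    obtain ⟨-, hue⟩ := he
    induction e using Sym2.ind with
    | _ a b =>
      rw [Sym2.mem_iff] at hue
      push_neg at hue
      have ha : flip u t a = t a := Function.update_of_ne (Ne.symm hue.1) _ _
      have hb : flip u t b = t b := Function.update_of_ne (Ne.symm hue.2) _ _
      simp [zf, ha, hb]
  have h1 : ∑ e ∈ G.edgeFinset.filter (fun e => u ∈ e), (zf e (flip u t) - zf e t)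
      = ∑ i : Fin d, (-2) * (if t u then (-1:ℂ) else 1) * (if t (nbr i) then (-1:ℂ) else 1) := by
    refine (Finset.sum_bij (fun i _ => s(u, nbr i)) ?_ ?_ ?_ ?_).symm
    · intro i _
      simp only [Finset.mem_filter, SimpleGraph.mem_edgeFinset, SimpleGraph.mem_edgeSet]
      exact ⟨hadj i, Sym2.mem_mk_left u (nbr i)⟩
    · intro i _ j _ hij
      rw [Sym2.eq_iff] at hij
      rcases hij with ⟨-, h⟩ | ⟨h, -⟩
      · exact hinj h
      · exact absurd h (hadj j).ne
    · intro e he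
      simp only [Finset.mem_filter, SimpleGraph.mem_edgeFinset, SimpleGraph.mem_edgeSet] at he
      obtain ⟨hadj', hue⟩ := he
      induction e using Sym2.ind with
      | _ a b =>
        rw [Sym2.mem_iff] at hue
        rcases hue with h | h
        · obtain ⟨i, hi⟩ := (hnbr b).1 (h ▸ hadj')
          exact ⟨i, Finset.mem_univ i, show s(u, nbr i) = s(a, b) by rw [hi, h]⟩
        · obtain ⟨i, hi⟩ := (hnbr a).1 (h ▸ hadj'.symm)
          exact ⟨i, Finset.mem_univ i, show s(u, nbr i) = s(a, b) by rw [hi, h, Sym2.eq_swap]⟩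
    · intro i _
      have hne : nbr i ≠ u := (hadj i).ne'
      have ha : flip u t u = !(t u) := Function.update_self _ _ _
      have hb : flip u t (nbr i) = t (nbr i) := Function.update_of_ne hne _ _
      simp only [zf, Sym2.lift_mk, ha, hb]
      cases htu : t u <;> cases htn : t (nbr i) <;> norm_num
  rw [h1, h2, add_zero, ← Finset.mul_sum]

lemma f_Phi (G : SimpleGraph V) [DecidableRel G.Adj] (u : V) {d : ℕ}
    (nbr : Fin d → V) (hinj : Function.Injective nbr)
    (hnbr : ∀ w : V, G.Adj u w ↔ ∃ i, nbr i = w) (g : (V → Bool) → ℂ) :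
    (4:ℂ)⁻¹ • ⁅HpU G, ⁅HpU G, Phi u g⁆⁆ =
      Phi u (fun t => (∑ i, (if t (nbr i) then (-1:ℂ) else 1))^2 * g t) := by
  rw [HpU_diag, lie_diag_Phi, lie_diag_Phi, Phi_smul]
  apply congrArg (Phi u)
  funext t
  rw [hfun_flip G u nbr hinj hnbr t]
  cases htu : t u <;> norm_num <;> ring

lemma key_identity {d : ℕ} (τ : Fin d → ℂ) :
    (2:ℂ) * ∑ x ∈ Finset.univ.filter (fun x : Fin d → Bool =>
        Even ((Finset.univ.filter fun i => x i = true).card)),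
      ∏ i, (if x i then τ i else 1)
    = (∏ i, (1 + τ i)) + ∏ i, (1 - τ i) := by
  have hA : ∀ σ : Fin d → ℂ, ∏ i, (1 + σ i)
      = ∑ x : Fin d → Bool, ∏ i, (if x i then σ i else 1) := by
    intro σ
    have h1 : ∀ i : Fin d, (1 + σ i) = ∑ b ∈ (Finset.univ : Finset Bool),
        (if b then σ i else 1) := by
      intro i; rw [Fintype.sum_bool]; simp [add_comm]
    rw [Finset.prod_congr rfl (fun i _ => h1 i), Finset.prod_univ_sum,
      Fintype.piFinset_univ]
  have hneg : ∀ x : Fin d → Bool, ∏ i, (if x i then -τ i else 1)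
      = (-1:ℂ)^((Finset.univ.filter fun i => x i = true).card)
        * ∏ i, (if x i then τ i else 1) := by
    intro x
    rw [show ((-1:ℂ)^((Finset.univ.filter fun i => x i = true).card)) =
        ∏ i, (if x i then (-1:ℂ) else 1) by
      rw [Finset.prod_ite, Finset.prod_const, Finset.prod_const, one_pow, mul_one],
      ← Finset.prod_mul_distrib]
    exact Finset.prod_congr rfl fun i _ => by cases hx : x i <;> simp [hx]
  have hB : ∏ i, (1 - τ i) = ∑ x : Fin d → Bool,
      (-1:ℂ)^((Finset.univ.filter fun i => x i = true).card)
        * ∏ i, (if x i then τ i else 1) := by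
    have := hA (fun i => -τ i)
    simp only [← sub_eq_add_neg] at this
    rw [this]
    exact Finset.sum_congr rfl fun x _ => hneg x
  rw [hA τ, hB, ← Finset.sum_add_distrib,
    ← Finset.sum_filter_add_sum_filter_not Finset.univ
      (fun x : Fin d → Bool => Even ((Finset.univ.filter fun i => x i = true).card))]
  have hodd : ∑ x ∈ Finset.univ.filter (fun x : Fin d → Bool =>
      ¬ Even ((Finset.univ.filter fun i => x i = true).card)),
      ((∏ i, (if x i then τ i else 1)) + (-1:ℂ)^((Finset.univ.filter fun i => x i = true).card)
        * ∏ i, (if x i then τ i else 1)) = 0 := by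
    apply Finset.sum_eq_zero
    intro x hx
    simp only [Finset.mem_filter] at hx
    rw [(Nat.not_even_iff_odd.1 hx.2).neg_one_pow]
    ring
  rw [hodd, add_zero, Finset.mul_sum]
  apply Finset.sum_congr rfl
  intro x hx
  simp only [Finset.mem_filter] at hx
  rw [hx.2.neg_one_pow]
  ring

section Comb
open Finset
variable {d : ℕ}

/-- The sign vector of the character indexed by `y`, with coordinate `i0` forced to `+1`. -/
def cc (i0 : Fin d) (y : Fin d → Bool) (i : Fin d) : ℂ :=
  if i = i0 then 1 else (if y i then -1 else 1)

/-- The character pairing. -/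
def chi (i0 : Fin d) (y x' : Fin d → Bool) : ℂ :=
  ∏ i ∈ Finset.univ.erase i0, (if y i && x' i then (-1:ℂ) else 1)

/-- Reduced Hamming weight. -/
def kk (i0 : Fin d) (y : Fin d → Bool) : ℕ :=
  ((Finset.univ.erase i0).filter fun i => y i = true).card

/-- Even-weight vectors. -/
def Ev (d : ℕ) : Finset (Fin d → Bool) :=
  Finset.univ.filter (fun x => Even ((Finset.univ.filter fun i => x i = true).card))

lemma cc_cases (i0 : Fin d) (y : Fin d → Bool) (i : Fin d) :
    cc i0 y i = 1 ∨ cc i0 y i = -1 := by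
  unfold cc; split_ifs <;> simp

lemma cc_mul_self (i0 : Fin d) (y : Fin d → Bool) (i : Fin d) :
    cc i0 y i * cc i0 y i = 1 := by
  rcases cc_cases i0 y i with h | h <;> rw [h] <;> norm_num

lemma chi_eq (i0 : Fin d) (y x' : Fin d → Bool) :
    chi i0 y x' = ∏ i, (if x' i then cc i0 y i else 1) := by
  rw [chi, ← Finset.mul_prod_erase Finset.univ _ (Finset.mem_univ i0)]
  rw [show (if x' i0 then cc i0 y i0 else 1) = 1 by simp [cc], one_mul]
  refine Finset.prod_congr rfl fun i hi => ?_
  have hi' : i ≠ i0 := (Finset.mem_erase.1 hi).1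
  unfold cc
  rw [if_neg hi']
  cases hy : y i <;> cases hx : x' i <;> simp [hy, hx]

lemma chi_mul_prod (i0 : Fin d) (y x' : Fin d → Bool) (σ : Fin d → ℂ) :
    chi i0 y x' * ∏ i, (if x' i then σ i else 1)
      = ∏ i, (if x' i then cc i0 y i * σ i else 1) := by
  rw [chi_eq, ← Finset.prod_mul_distrib]
  exact Finset.prod_congr rfl fun i _ => by cases hx : x' i <;> simp [hx]

lemma chi_mul_chi (i0 : Fin d) (x x' x'' : Fin d → Bool) :
    chi i0 x'' x * chi i0 x'' x' = chi i0 (fun i => x i != x' i) x'' := by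
  unfold chi
  rw [← Finset.prod_mul_distrib]
  refine Finset.prod_congr rfl fun i _ => ?_
  cases h1 : x'' i <;> cases h2 : x i <;> cases h3 : x' i <;> simp [h1, h2, h3]

lemma card_filter_eq (i0 : Fin d) (y : Fin d → Bool) :
    (Finset.univ.filter fun i => y i = true).card = kk i0 y + (if y i0 then 1 else 0) := by
  rw [kk]
  conv_lhs => rw [← Finset.insert_erase (Finset.mem_univ i0)]
  rw [Finset.filter_insert]
  have hni : i0 ∉ (Finset.univ.erase i0).filter fun i => y i = true :=
    fun h => (Finset.mem_erase.1 (Finset.mem_filter.1 h).1).1 rfl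
  split_ifs with h
  · rw [Finset.card_insert_of_notMem hni]
  · rw [add_zero]

lemma sum_cc (hd : 1 ≤ d) (i0 : Fin d) (y : Fin d → Bool) :
    ∑ i, cc i0 y i = (d:ℂ) - 2 * kk i0 y := by
  simp only [kk]
  rw [← Finset.add_sum_erase Finset.univ _ (Finset.mem_univ i0),
    show cc i0 y i0 = 1 by unfold cc; rw [if_pos rfl]]
  rw [show ∑ i ∈ Finset.univ.erase i0, cc i0 y i
      = ∑ i ∈ Finset.univ.erase i0, (if y i = true then (-1:ℂ) else 1) from
    Finset.sum_congr rfl fun i hi => by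
      unfold cc; rw [if_neg (Finset.mem_erase.1 hi).1]]
  rw [Finset.sum_ite, Finset.sum_const, Finset.sum_const]
  have hcard : ((Finset.univ.erase i0).filter fun i => y i = true).card
      + ((Finset.univ.erase i0).filter fun i => ¬ y i = true).card = d - 1 := by
    rw [Finset.card_filter_add_card_filter_not,
      Finset.card_erase_of_mem (Finset.mem_univ i0), Finset.card_univ, Fintype.card_fin]
  have h2 : (((Finset.univ.erase i0).filter fun i => ¬ y i = true).card : ℂ)
      = (d:ℂ) - 1 - ((Finset.univ.erase i0).filter fun i => y i = true).card := by
    have := congrArg (Nat.cast : ℕ → ℂ) hcard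
    push_cast [Nat.cast_sub hd] at this
    linear_combination this
  simp only [nsmul_eq_mul]
  rw [h2]
  ring

lemma Ev_eq (x : Fin d → Bool) :
    x ∈ Ev d ↔ Even ((Finset.univ.filter fun i => x i = true).card) := by
  simp [Ev]

lemma Ev_nonempty : (Ev d).Nonempty := by
  refine ⟨fun _ => false, ?_⟩
  rw [Ev_eq]
  simp

lemma eq_of_agree_off (i0 : Fin d) {x x' : Fin d → Bool} (hx : x ∈ Ev d) (hx' : x' ∈ Ev d)
    (h : ∀ i, i ≠ i0 → x i = x' i) : x = x' := by
  have hk : kk i0 x = kk i0 x' := by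
    unfold kk
    exact congrArg Finset.card (Finset.filter_congr fun i hi => by
      rw [h i (Finset.mem_erase.1 hi).1])
  have e1 := (Ev_eq x).1 hx
  have e2 := (Ev_eq x').1 hx'
  rw [card_filter_eq i0 x] at e1
  rw [card_filter_eq i0 x', ← hk] at e2
  have hb : x i0 = x' i0 := by
    cases hxi : x i0 <;> cases hxi' : x' i0 <;>
      rw [hxi] at e1 <;> rw [hxi'] at e2 <;>
      simp_all [Nat.even_add_one, Nat.even_iff, Nat.odd_iff] <;> omega
  funext i
  by_cases hi : i = i0
  · rw [hi, hb]
  · exact h i hi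

lemma two_pow_pred (hd : 1 ≤ d) : (2:ℂ)^d = 2 * 2^(d-1) := by
  conv_lhs => rw [show d = 1 + (d-1) by omega]
  rw [pow_add, pow_one]

lemma orth (hd : 1 ≤ d) (i0 : Fin d) {x x' : Fin d → Bool}
    (hx : x ∈ Ev d) (hx' : x' ∈ Ev d) :
    ∑ x'' ∈ Ev d, chi i0 x'' x * chi i0 x'' x'
      = if x' = x then (2:ℂ)^(d-1) else 0 := by
  have h2 : (2:ℂ) * ∑ x'' ∈ Ev d, chi i0 x'' x * chi i0 x'' x'
      = (∏ i, (1 + cc i0 (fun i => x i != x' i) i))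
        + ∏ i, (1 - cc i0 (fun i => x i != x' i) i) := by
    rw [show ∑ x'' ∈ Ev d, chi i0 x'' x * chi i0 x'' x'
        = ∑ x'' ∈ Ev d, ∏ i, (if x'' i then cc i0 (fun i => x i != x' i) i else 1) from
      Finset.sum_congr rfl fun x'' _ => by rw [chi_mul_chi, chi_eq]]
    exact (key_identity _)
  have hz : ∏ i, ((1:ℂ) - cc i0 (fun i => x i != x' i) i) = 0 := by
    refine Finset.prod_eq_zero (Finset.mem_univ i0) ?_
    unfold cc; rw [if_pos rfl]; ring
  rw [hz, add_zero] at h2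
  refine mul_left_cancel₀ (two_ne_zero) ?_
  split_ifs with hxx
  · rw [h2, ← two_pow_pred hd]
    subst hxx
    have hval : ∀ i, (1:ℂ) + cc i0 (fun j => x' j != x' j) i = 2 := by
      intro i; norm_num [cc]
    rw [show (∏ i, ((1:ℂ) + cc i0 (fun j => x' j != x' j) i)) = (2:ℂ)^d from by
      rw [Finset.prod_congr rfl fun i _ => hval i, Finset.prod_const, Finset.card_univ,
        Fintype.card_fin]]
  · rw [h2, mul_zero]
    obtain ⟨i, hi, hne⟩ : ∃ i, i ≠ i0 ∧ x i ≠ x' i := by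
      by_contra hcon
      push_neg at hcon
      exact hxx ((eq_of_agree_off i0 hx hx' hcon).symm)
    refine Finset.prod_eq_zero (Finset.mem_univ i) ?_
    unfold cc
    rw [if_neg hi, if_pos (by simp [bne_iff_ne, hne])]
    ring

lemma ge_eigen (hd : 1 ≤ d) (i0 : Fin d) (σ : Fin d → ℂ)
    (hσ : ∀ i, σ i = 1 ∨ σ i = -1) (y : Fin d → Bool) :
    (∑ i, σ i)^2 * (∑ x' ∈ Ev d, chi i0 y x' * ∏ i, (if x' i then σ i else 1))
      = ((d:ℂ) - 2 * kk i0 y)^2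
        * (∑ x' ∈ Ev d, chi i0 y x' * ∏ i, (if x' i then σ i else 1)) := by
  have hg2 : (2:ℂ) * (∑ x' ∈ Ev d, chi i0 y x' * ∏ i, (if x' i then σ i else 1))
      = (∏ i, (1 + cc i0 y i * σ i)) + ∏ i, (1 - cc i0 y i * σ i) := by
    rw [show ∑ x' ∈ Ev d, chi i0 y x' * ∏ i, (if x' i then σ i else 1)
        = ∑ x' ∈ Ev d, ∏ i, (if x' i then cc i0 y i * σ i else 1) from
      Finset.sum_congr rfl fun x' _ => chi_mul_prod i0 y x' σ]
    exact key_identity _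
  by_cases h1 : ∀ i, σ i = cc i0 y i
  · rw [show ∑ i, σ i = (d:ℂ) - 2 * kk i0 y by
      rw [Finset.sum_congr rfl fun i _ => h1 i]; exact sum_cc hd i0 y]
  by_cases hm : ∀ i, σ i = -cc i0 y i
  · rw [show ∑ i, σ i = -((d:ℂ) - 2 * kk i0 y) by
      rw [Finset.sum_congr rfl fun i _ => hm i, Finset.sum_neg_distrib, sum_cc hd i0 y],
      neg_sq]
  · have hg0 : (∑ x' ∈ Ev d, chi i0 y x' * ∏ i, (if x' i then σ i else 1)) = 0 := by
      push_neg at h1 hm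
      obtain ⟨i, hi⟩ := h1
      obtain ⟨j, hj⟩ := hm
      have hpi : (1:ℂ) + cc i0 y i * σ i = 0 := by
        rcases hσ i with h | h <;> rcases cc_cases i0 y i with h' | h'
        · exact absurd (h.trans h'.symm) hi
        · rw [h, h']; ring
        · rw [h, h']; ring
        · exact absurd (h.trans h'.symm) hi
      have hpj : (1:ℂ) - cc i0 y j * σ j = 0 := by
        rcases hσ j with h | h <;> rcases cc_cases i0 y j with h' | h'
        · rw [h, h']; ring
        · exact absurd (show σ j = -cc i0 y j by simp [h, h']) hj
        · exact absurd (show σ j = -cc i0 y j by simp [h, h']) hj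
        · rw [h, h']; ring
      have : (2:ℂ) * (∑ x' ∈ Ev d, chi i0 y x' * ∏ i, (if x' i then σ i else 1)) = 0 := by
        rw [hg2, Finset.prod_eq_zero (Finset.mem_univ i) hpi,
          Finset.prod_eq_zero (Finset.mem_univ j) hpj, add_zero]
      exact (mul_eq_zero.1 this).resolve_left two_ne_zero
    rw [hg0, mul_zero, mul_zero]

lemma ge_val (i0 : Fin d) (y : Fin d → Bool) (σ : Fin d → ℂ)
    (hσ : ∀ i, σ i = cc i0 y i) :
    ∑ x' ∈ Ev d, chi i0 y x' * ∏ i, (if x' i then σ i else 1) = ((Ev d).card : ℂ) := by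
  have h1 : ∀ x' ∈ Ev d, chi i0 y x' * ∏ i, (if x' i then σ i else 1) = 1 := by
    intro x' _
    rw [chi_mul_prod]
    rw [Finset.prod_congr rfl fun i _ => show (if x' i then cc i0 y i * σ i else 1) = 1 from by
      cases hx : x' i
      · rw [if_neg (by simp [hx])]
      · rw [if_pos (by simp [hx]), hσ i, cc_mul_self]]
    exact Finset.prod_const_one
  rw [Finset.sum_congr rfl h1, Finset.sum_const, nsmul_eq_mul, mul_one]

end Comb

end Stmt10Aux

open Stmt10Aux in
theorem stmt_10 {V : Type*} [Fintype V] [DecidableEq V] (G : SimpleGraph V)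
    [DecidableRel G.Adj] (u : V) (d : ℕ) (hd : 1 ≤ d) (nbr : Fin d → V)
    (hinj : Function.Injective nbr)
    (hnbr : ∀ w : V, G.Adj u w ↔ ∃ i, nbr i = w) :
    ∃ (w : {x : Fin d → Bool //
            Even ((Finset.univ.filter fun i => x i = true).card)} →
          Matrix (V → Bool) (V → Bool) ℂ)
      (lam : {x : Fin d → Bool //
            Even ((Finset.univ.filter fun i => x i = true).card)} → ℂ),
      (∀ e, w e ∈ starSpan u nbr) ∧
      (∀ e, w e ≠ 0) ∧
      (∀ e, (4 : ℂ)⁻¹ • ⁅HpU G, ⁅HpU G, w e⁆⁆ = lam e • w e) ∧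
      Submodule.span ℂ (Set.range w) = starSpan u nbr ∧
      Set.range lam = {c : ℂ | ∃ k : ℕ, k ≤ d - 1 ∧ c = ((d : ℂ) - 2 * k) ^ 2} ∧
      (∀ e, ∃ m : ℤ, m % 2 = (d : ℤ) % 2 ∧ lam e = (m : ℂ) ^ 2) := by
  classical
  let i0 : Fin d := ⟨0, hd⟩
  have hw : ∀ y : Fin d → Bool, ∑ x' ∈ Ev d, chi i0 y x' • evenStar u nbr x'
      = Phi u (fun t => ∑ x' ∈ Ev d, chi i0 y x' *
          ∏ i, (if x' i then (if t (nbr i) then (-1:ℂ) else 1) else 1)) := by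
    intro y
    exact Phi_sum u (Ev d) (chi i0 y)
      (fun x' s => ∏ i, (if x' i then (if s (nbr i) then (-1:ℂ) else 1) else 1))
  refine ⟨fun e => ∑ x' ∈ Ev d, chi i0 e.1 x' • evenStar u nbr x',
    fun e => ((d:ℂ) - 2 * kk i0 e.1)^2, ?_, ?_, ?_, ?_, ?_, ?_⟩
  · intro e
    exact Submodule.sum_mem _ fun x' hx' =>
      Submodule.smul_mem _ _ (Submodule.subset_span ⟨x', (Ev_eq x').1 hx', rfl⟩)
  · intro e
    show (∑ x' ∈ Ev d, chi i0 e.1 x' • evenStar u nbr x') ≠ 0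
    rw [hw e.1]
    intro hzero
    set t0 : V → Bool := fun v =>
      if h : ∃ i, nbr i = v then (!(decide (h.choose = i0)) && e.1 h.choose) else false
      with ht0def
    have ht0 : ∀ i, t0 (nbr i) = (!(decide (i = i0)) && e.1 i) := by
      intro i
      have hex : ∃ j, nbr j = nbr i := ⟨i, rfl⟩
      have hch : hex.choose = i := hinj hex.choose_spec
      rw [ht0def]
      simp only [dif_pos hex]
      rw [hch]
    have hσ0 : ∀ i, (if t0 (nbr i) then (-1:ℂ) else 1) = cc i0 e.1 i := by
      intro i
      rw [ht0 i]
      by_cases hii : i = i0 <;> cases hei : e.1 i <;> simp [cc, hii, hei]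
    have h0 : (∑ x' ∈ Ev d, chi i0 e.1 x' *
        ∏ i, (if x' i then (if t0 (nbr i) then (-1:ℂ) else 1) else 1)) = 0 := by
      have := congrFun (congrFun hzero (flip u t0)) t0
      rwa [Phi_apply, if_pos rfl, Matrix.zero_apply] at this
    rw [ge_val i0 e.1 _ hσ0] at h0
    obtain ⟨x0, hx0⟩ := Ev_nonempty (d := d)
    exact (Nat.cast_ne_zero (R := ℂ)).2 (Finset.card_ne_zero_of_mem hx0) h0
  · intro e
    show (4:ℂ)⁻¹ • ⁅HpU G, ⁅HpU G, ∑ x' ∈ Ev d, chi i0 e.1 x' • evenStar u nbr x'⁆⁆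
      = ((d:ℂ) - 2 * kk i0 e.1)^2 • ∑ x' ∈ Ev d, chi i0 e.1 x' • evenStar u nbr x'
    rw [hw e.1, f_Phi G u nbr hinj hnbr, Phi_smul]
    apply congrArg (Phi u)
    funext t
    exact ge_eigen hd i0 (fun i => if t (nbr i) then (-1:ℂ) else 1)
      (fun i => by cases h : t (nbr i) <;> simp [h]) e.1
  · apply le_antisymm
    · rw [Submodule.span_le]
      rintro M ⟨e, rfl⟩
      exact Submodule.sum_mem _ fun x' hx' =>
        Submodule.smul_mem _ _ (Submodule.subset_span ⟨x', (Ev_eq x').1 hx', rfl⟩)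
    · rw [starSpan, Submodule.span_le]
      rintro M ⟨x, hx, rfl⟩
      have hxEv : x ∈ Ev d := (Ev_eq x).2 hx
      have hkey : ∑ x'' ∈ Ev d, chi i0 x'' x • (∑ x' ∈ Ev d, chi i0 x'' x' • evenStar u nbr x')
          = ((2:ℂ)^(d-1)) • evenStar u nbr x := by
        calc ∑ x'' ∈ Ev d, chi i0 x'' x • ∑ x' ∈ Ev d, chi i0 x'' x' • evenStar u nbr x'
            = ∑ x'' ∈ Ev d, ∑ x' ∈ Ev d,
                (chi i0 x'' x * chi i0 x'' x') • evenStar u nbr x' := by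
              refine Finset.sum_congr rfl fun x'' _ => ?_
              rw [Finset.smul_sum]
              exact Finset.sum_congr rfl fun x' _ => (smul_smul _ _ _)
          _ = ∑ x' ∈ Ev d, (∑ x'' ∈ Ev d, chi i0 x'' x * chi i0 x'' x') • evenStar u nbr x' := by
              rw [Finset.sum_comm]
              exact Finset.sum_congr rfl fun x' _ => Finset.sum_smul.symm
          _ = ((2:ℂ)^(d-1)) • evenStar u nbr x := by
              rw [Finset.sum_eq_single_of_mem x hxEv ?_]
              · rw [orth hd i0 hxEv hxEv, if_pos rfl]
              · intro x' hx' hne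
                rw [orth hd i0 hxEv hx', if_neg hne, zero_smul]
      have hsub : ∑ e : {x : Fin d → Bool //
            Even ((Finset.univ.filter fun i => x i = true).card)},
            chi i0 e.1 x • (∑ x' ∈ Ev d, chi i0 e.1 x' • evenStar u nbr x')
          = ∑ x'' ∈ Ev d, chi i0 x'' x • (∑ x' ∈ Ev d, chi i0 x'' x' • evenStar u nbr x') :=
        (Finset.sum_subtype (Ev d) (fun x => Ev_eq x)
          (fun y => chi i0 y x • ∑ x' ∈ Ev d, chi i0 y x' • evenStar u nbr x')).symm
      have heq : evenStar u nbr x = ((2:ℂ)^(d-1))⁻¹ •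
          ∑ e : {x : Fin d → Bool //
            Even ((Finset.univ.filter fun i => x i = true).card)},
            chi i0 e.1 x • (∑ x' ∈ Ev d, chi i0 e.1 x' • evenStar u nbr x') := by
        rw [hsub, hkey, smul_smul, inv_mul_cancel₀ (pow_ne_zero _ two_ne_zero), one_smul]
      rw [heq]
      exact Submodule.smul_mem _ _ (Submodule.sum_mem _ fun e _ =>
        Submodule.smul_mem _ _ (Submodule.subset_span ⟨e, rfl⟩))
  · ext cv
    simp only [Set.mem_range, Set.mem_setOf_eq]
    constructor
    · rintro ⟨e, rfl⟩
      refine ⟨kk i0 e.1, ?_, rfl⟩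
      calc kk i0 e.1 ≤ (Finset.univ.erase i0).card := Finset.card_filter_le _ _
        _ = d - 1 := by
          rw [Finset.card_erase_of_mem (Finset.mem_univ i0), Finset.card_univ,
            Fintype.card_fin]
    · rintro ⟨k, hk, rfl⟩
      obtain ⟨S, hS, hScard⟩ := Finset.exists_subset_card_eq
        (show k ≤ (Finset.univ.erase i0).card by
          rw [Finset.card_erase_of_mem (Finset.mem_univ i0), Finset.card_univ,
            Fintype.card_fin]
          exact hk)
      set x : Fin d → Bool := fun i => if i = i0 then decide (Odd k) else decide (i ∈ S)
        with hxdef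
      have hkx : kk i0 x = k := by
        rw [kk, show (Finset.univ.erase i0).filter (fun i => x i = true) = S from ?_]
        · exact hScard
        · ext i
          constructor
          · intro hi
            obtain ⟨hi1, hi2⟩ := Finset.mem_filter.1 hi
            have hne := (Finset.mem_erase.1 hi1).1
            simpa [hxdef, hne] using hi2
          · intro hi
            refine Finset.mem_filter.2 ⟨hS hi, ?_⟩
            have hne : i ≠ i0 := (Finset.mem_erase.1 (hS hi)).1
            simp [hxdef, hne, hi]
      have hxev : Even ((Finset.univ.filter fun i => x i = true).card) := by
        rw [card_filter_eq i0 x, hkx]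
        rcases Nat.even_or_odd k with he | ho
        · rw [if_neg (by simp [hxdef, Nat.not_odd_iff_even.2 he])]
          simpa using he
        · rw [if_pos (by simp [hxdef, ho])]
          exact ho.add_one
      exact ⟨⟨x, hxev⟩, by simp only; rw [hkx]⟩
  · intro e
    refine ⟨(d:ℤ) - 2 * kk i0 e.1, by omega, ?_⟩
    push_cast
    ring
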